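/- Suppose n ≥ (k−t)(k−t+1) + t, k ≥ t+3, F ⊆ C([n],k) is t-intersecting, and B ⊆ F is a subfamily such that no member of B contains any minimum t-cover of F. Then |B| ≤ (k−t+1)^{τ_t(F)−t+1} · C(τ_t(F), t) · C(n−τ_t(F)−1, k−τ_t(F)−1). -/

import Mathlib

open Finset

def Intersecting (t : ℕ) (𝓕 : Finset (Finset ℕ)) : Prop :=
  ∀ A ∈ 𝓕, ∀ B ∈ 𝓕, t ≤ (A ∩ B).card

def IsCover (n t : ℕ) (𝓕 : Finset (Finset ℕ)) (S : Finset ℕ) : Prop :=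
  S ⊆ Finset.range n ∧ ∀ A ∈ 𝓕, t ≤ (S ∩ A).card

noncomputable def tau (n t : ℕ) (𝓕 : Finset (Finset ℕ)) : ℕ :=
  sInf {m | ∃ S, IsCover n t 𝓕 S ∧ S.card = m}

open Classical in
noncomputable def minCovers (n t : ℕ) (𝓕 : Finset (Finset ℕ)) : Finset (Finset ℕ) :=
  ((Finset.range n).powerset).filter
    (fun S => (∀ A ∈ 𝓕, t ≤ (S ∩ A).card) ∧ S.card = tau n t 𝓕)

def MaximalIntersecting (n k t : ℕ) (𝓕 : Finset (Finset ℕ)) : Prop :=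
  𝓕 ⊆ (Finset.range n).powersetCard k ∧ Intersecting t 𝓕 ∧
    ∀ 𝓖 : Finset (Finset ℕ), 𝓖 ⊆ (Finset.range n).powersetCard k →
      Intersecting t 𝓖 → 𝓕 ⊆ 𝓖 → 𝓖 = 𝓕

lemma choose_le_pow' (m b : ℕ) : (m + b).choose b ≤ (m + 1) ^ b := by
  induction b with
  | zero => simp
  | succ b ih =>
    have h1 : (m + (b + 1)).choose (b + 1) = (m + b).choose b + (m + b).choose (b + 1) := by
      rw [show m + (b + 1) = (m + b) + 1 from rfl, Nat.choose_succ_succ']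
    have h2 : (m + b).choose (b + 1) * (b + 1) = (m + b).choose b * m := by
      have h := Nat.choose_succ_right_eq (m + b) b
      simpa using h
    have h3 : (m + b).choose (b + 1) ≤ (m + b).choose b * m := by
      calc (m + b).choose (b + 1) ≤ (m + b).choose (b + 1) * (b + 1) :=
            Nat.le_mul_of_pos_right _ (Nat.succ_pos b)
        _ = (m + b).choose b * m := h2
    calc (m + (b + 1)).choose (b + 1) = (m + b).choose b + (m + b).choose (b + 1) := h1
      _ ≤ (m + b).choose b + (m + b).choose b * m := by omega
      _ = (m + b).choose b * (m + 1) := by ring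
      _ ≤ (m + 1) ^ b * (m + 1) := Nat.mul_le_mul_right _ ih
      _ = (m + 1) ^ (b + 1) := by rw [pow_succ]

lemma sup_count' (n k : ℕ) (E : Finset ℕ) (hE : E ⊆ Finset.range n) :
    (((Finset.range n).powersetCard k).filter (fun B => E ⊆ B)).card
      ≤ (n - E.card).choose (k - E.card) := by
  classical
  have h1 : (((Finset.range n).powersetCard k).filter (fun B => E ⊆ B)).card
      ≤ ((Finset.range n \ E).powersetCard (k - E.card)).card := by
    apply Finset.card_le_card_of_injOn (fun B => B \ E)
    · intro B hB
      simp only [Finset.mem_coe, Finset.mem_filter, Finset.mem_powersetCard] at hB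
      obtain ⟨⟨hBr, hBk⟩, hEB⟩ := hB
      rw [Finset.mem_coe, Finset.mem_powersetCard]
      exact ⟨Finset.sdiff_subset_sdiff hBr (Finset.Subset.refl E),
        by rw [Finset.card_sdiff_of_subset hEB, hBk]⟩
    · intro a ha b hb hab
      simp only [Finset.coe_filter, Set.mem_setOf_eq, Finset.mem_powersetCard] at ha hb
      have h2 : a \ E ∪ E = b \ E ∪ E := by simp only at hab; rw [hab]
      rwa [Finset.sdiff_union_of_subset ha.2, Finset.sdiff_union_of_subset hb.2] at h2
  rw [Finset.card_powersetCard, Finset.card_sdiff_of_subset hE, Finset.card_range] at h1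
  exact h1

theorem stmt7 (n k t : ℕ) (ht : 1 ≤ t) (hk : t + 3 ≤ k)
    (hn : (k - t) * (k - t + 1) + t ≤ n)
    (𝓕 𝓑 : Finset (Finset ℕ)) (h𝓕 : 𝓕 ⊆ (Finset.range n).powersetCard k)
    (hint : Intersecting t 𝓕) (h𝓑 : 𝓑 ⊆ 𝓕)
    (hnc : ∀ B ∈ 𝓑, ∀ T ∈ minCovers n t 𝓕, ¬ T ⊆ B) :
    𝓑.card ≤ (k - t + 1) ^ (tau n t 𝓕 - t + 1) * (tau n t 𝓕).choose t *
      (n - tau n t 𝓕 - 1).choose (k - tau n t 𝓕 - 1) := by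
  classical
  rcases Finset.eq_empty_or_nonempty 𝓑 with hB | ⟨B0, hB0⟩
  · simp [hB]
  set τ := tau n t 𝓕 with hτdef
  have hB0F : B0 ∈ 𝓕 := h𝓑 hB0
  have hmem : ∀ A ∈ 𝓕, A ⊆ Finset.range n ∧ A.card = k := by
    intro A hA
    have h := h𝓕 hA
    rwa [Finset.mem_powersetCard] at h
  have htk : t ≤ k := by omega
  have hkn : k ≤ n := by
    have h1 : k - t ≤ (k - t) * (k - t + 1) := Nat.le_mul_of_pos_right _ (by omega)
    set P := (k - t) * (k - t + 1) with hP
    omega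
  -- the set of cover cardinalities is nonempty
  have hcovne : {m | ∃ S, IsCover n t 𝓕 S ∧ S.card = m}.Nonempty := by
    refine ⟨n, Finset.range n, ⟨Finset.Subset.refl _, ?_⟩, Finset.card_range n⟩
    intro A hA
    obtain ⟨hAr, hAk⟩ := hmem A hA
    rw [Finset.inter_eq_right.mpr hAr, hAk]
    exact htk
  obtain ⟨T, hTcov, hTcard⟩ : ∃ S, IsCover n t 𝓕 S ∧ S.card = τ := Nat.sInf_mem hcovne
  have htτ : t ≤ τ := by
    have h1 := hTcov.2 B0 hB0F
    have h2 : (T ∩ B0).card ≤ T.card := Finset.card_le_card Finset.inter_subset_left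
    omega
  have hτk : τ ≤ k := by
    apply Nat.sInf_le
    exact ⟨B0, ⟨(hmem B0 hB0F).1, fun A hA => hint B0 hB0F A hA⟩, (hmem B0 hB0F).2⟩
  -- key arithmetic
  have keyarith : ∀ m : ℕ, t + 1 ≤ m → m ≤ k → (k - t + 1) * (k - m) + m ≤ n := by
    intro m h1 h2
    obtain ⟨a, ha⟩ : ∃ a, k = t + a := ⟨k - t, by omega⟩
    obtain ⟨dd, hd⟩ : ∃ dd, k = m + dd := ⟨k - m, by omega⟩
    have ha' : k - t = a := by omega
    have hd' : k - m = dd := by omega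
    have hn' : a * (a + 1) + t ≤ n := by rw [← ha']; exact hn
    rw [ha', hd']
    have e2 : a * dd ≤ a * a := Nat.mul_le_mul_left a (by omega)
    have e3 : a * (a + 1) = a * a + a := by ring
    have e1 : (a + 1) * dd = a * dd + dd := by ring
    have e4 : dd + m = t + a := by omega
    linarith
  -- chain inequality
  have chain : ∀ i : ℕ, τ + 1 + i ≤ k →
      (k - t + 1) ^ i * (n - (τ + 1 + i)).choose (k - (τ + 1 + i))
        ≤ (n - τ - 1).choose (k - τ - 1) := by
    intro i
    induction i with
    | zero =>
      intro _
      have e1 : n - (τ + 1 + 0) = n - τ - 1 := by omega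
      have e2 : k - (τ + 1 + 0) = k - τ - 1 := by omega
      rw [pow_zero, one_mul, e1, e2]
    | succ i ih =>
      intro h
      set m := τ + 1 + i with hm
      have hmk : m + 1 ≤ k := by omega
      have hmt : t + 1 ≤ m := by omega
      have hmn : m < n := by omega
      have hid : (n - m) * (n - m - 1).choose (k - m - 1)
          = (n - m).choose (k - m) * (k - m) := by
        have h0 := Nat.add_one_mul_choose_eq (n - m - 1) (k - m - 1)
        have e1 : n - m - 1 + 1 = n - m := by omega
        have e2 : k - m - 1 + 1 = k - m := by omega
        rw [e1, e2] at h0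
        exact h0
      have hstep : (k - t + 1) * (n - (m + 1)).choose (k - (m + 1))
          ≤ (n - m).choose (k - m) := by
        have e3 : n - (m + 1) = n - m - 1 := by omega
        have e4 : k - (m + 1) = k - m - 1 := by omega
        rw [e3, e4]
        have hkm : 0 < k - m := by omega
        refine Nat.le_of_mul_le_mul_right ?_ hkm
        calc (k - t + 1) * (n - m - 1).choose (k - m - 1) * (k - m)
            = ((k - t + 1) * (k - m)) * (n - m - 1).choose (k - m - 1) := by ring
          _ ≤ (n - m) * (n - m - 1).choose (k - m - 1) := by
              apply Nat.mul_le_mul_right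
              exact Nat.le_sub_of_add_le (keyarith m hmt (by omega))
          _ = (n - m).choose (k - m) * (k - m) := hid
      have e5 : τ + 1 + (i + 1) = m + 1 := by omega
      rw [e5, pow_succ]
      calc (k - t + 1) ^ i * (k - t + 1) * (n - (m + 1)).choose (k - (m + 1))
          = (k - t + 1) ^ i * ((k - t + 1) * (n - (m + 1)).choose (k - (m + 1))) := by ring
        _ ≤ (k - t + 1) ^ i * (n - m).choose (k - m) := Nat.mul_le_mul_left _ hstep
        _ ≤ (n - τ - 1).choose (k - τ - 1) := ih (by omega)
  -- the family 𝓖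
  set 𝓖 : Finset (Finset ℕ) := ((Finset.range n).powersetCard k).filter
    (fun B => (∀ A ∈ 𝓕, t ≤ (B ∩ A).card) ∧ ∀ S ∈ minCovers n t 𝓕, ¬ S ⊆ B) with h𝓖def
  have h𝓖mem : ∀ B, B ∈ 𝓖 ↔ (B ⊆ Finset.range n ∧ B.card = k) ∧
      (∀ A ∈ 𝓕, t ≤ (B ∩ A).card) ∧ (∀ S ∈ minCovers n t 𝓕, ¬ S ⊆ B) := by
    intro B
    rw [h𝓖def, Finset.mem_filter, Finset.mem_powersetCard]
  have supG : ∀ E : Finset ℕ, E ⊆ Finset.range n →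
      (𝓖.filter (fun B => E ⊆ B)).card ≤ (n - E.card).choose (k - E.card) := by
    intro E hE
    refine le_trans (Finset.card_le_card ?_) (sup_count' n k E hE)
    intro B hB
    rw [Finset.mem_filter] at hB ⊢
    rw [h𝓖mem] at hB
    exact ⟨Finset.mem_powersetCard.mpr hB.1.1, hB.2⟩
  have emptyG : ∀ E : Finset ℕ, k < E.card → 𝓖.filter (fun B => E ⊆ B) = ∅ := by
    intro E hEc
    rw [Finset.filter_eq_empty_iff]
    intro B hB hEB
    rw [h𝓖mem] at hB
    have h1 := Finset.card_le_card hEB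
    omega
  have atTop : ∀ E : Finset ℕ, E ⊆ Finset.range n → E.card = τ + 1 →
      (𝓖.filter (fun B => E ⊆ B)).card ≤ (n - τ - 1).choose (k - τ - 1) := by
    intro E hE hc
    by_cases hkc : E.card ≤ k
    · have h1 := supG E hE
      rw [hc] at h1
      have e1 : n - (τ + 1) = n - τ - 1 := by omega
      have e2 : k - (τ + 1) = k - τ - 1 := by omega
      rwa [e1, e2] at h1
    · rw [emptyG E (by omega)]
      simp
  -- main induction
  have key : ∀ d : ℕ, ∀ E : Finset ℕ, E ⊆ Finset.range n → t ≤ E.card →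
      E.card ≤ τ + 1 → τ + 1 ≤ E.card + d →
      (𝓖.filter (fun B => E ⊆ B)).card
        ≤ (k - t + 1) ^ (τ + 1 - E.card) * (n - τ - 1).choose (k - τ - 1) := by
    intro d
    induction d with
    | zero =>
      intro E hE h1 h2 h3
      have hc : E.card = τ + 1 := by omega
      rw [show τ + 1 - E.card = 0 by omega, pow_zero, one_mul]
      exact atTop E hE hc
    | succ d ih =>
      intro E hE h1 h2 h3
      by_cases hcE : E.card = τ + 1
      · rw [show τ + 1 - E.card = 0 by omega, pow_zero, one_mul]
        exact atTop E hE hcE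
      have heτ : E.card ≤ τ := by omega
      by_cases hcov : IsCover n t 𝓕 E
      · -- E is a minimum cover; 𝓖-members cannot contain it
        have hτE : τ ≤ E.card := Nat.sInf_le ⟨E, hcov, rfl⟩
        have hEm : E ∈ minCovers n t 𝓕 := by
          rw [minCovers, Finset.mem_filter, Finset.mem_powerset]
          exact ⟨hE, hcov.2, by omega⟩
        have hempty : 𝓖.filter (fun B => E ⊆ B) = ∅ := by
          rw [Finset.filter_eq_empty_iff]
          intro B hB hEB
          rw [h𝓖mem] at hB
          exact hB.2.2 E hEm hEB
        rw [hempty]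
        simp
      · -- E is not a cover: find a witness F
        have hex : ∃ A ∈ 𝓕, (E ∩ A).card < t := by
          by_contra hcon
          push_neg at hcon
          exact hcov ⟨hE, hcon⟩
        obtain ⟨F, hF, hjlt⟩ := hex
        obtain ⟨hFr, hFk⟩ := hmem F hF
        set j := (E ∩ F).card with hj
        set b := t - j with hb
        have hb1 : 1 ≤ b := by omega
        have hjE : j ≤ E.card := Finset.card_le_card Finset.inter_subset_left
        have hFEcard : (F \ E).card = k - j := by
          have h4 : F \ E = F \ (E ∩ F) := by
            ext x; simp only [Finset.mem_sdiff, Finset.mem_inter]; tauto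
          rw [h4, Finset.card_sdiff_of_subset Finset.inter_subset_right, hFk]
        -- covering by biUnion
        have hcover : 𝓖.filter (fun B => E ⊆ B) ⊆
            ((F \ E).powersetCard b).biUnion (fun S => 𝓖.filter (fun B => E ∪ S ⊆ B)) := by
          intro B hB
          rw [Finset.mem_filter] at hB
          obtain ⟨hBG, hEB⟩ := hB
          have hBF : t ≤ (B ∩ F).card := ((h𝓖mem B).mp hBG).2.1 F hF
          have h5 : (B ∩ F) ⊆ ((B ∩ F) \ E) ∪ (E ∩ F) := by
            intro x hx
            simp only [Finset.mem_union, Finset.mem_sdiff, Finset.mem_inter] at *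
            tauto
          have h6 : (B ∩ F).card ≤ ((B ∩ F) \ E).card + j := by
            calc (B ∩ F).card ≤ (((B ∩ F) \ E) ∪ (E ∩ F)).card := Finset.card_le_card h5
              _ ≤ ((B ∩ F) \ E).card + (E ∩ F).card := Finset.card_union_le _ _
          have h7 : b ≤ ((B ∩ F) \ E).card := by omega
          obtain ⟨S, hS1, hS2⟩ := Finset.exists_subset_card_eq h7
          rw [Finset.mem_biUnion]
          refine ⟨S, ?_, ?_⟩
          · rw [Finset.mem_powersetCard]
            refine ⟨?_, hS2⟩
            refine Finset.Subset.trans hS1 ?_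
            exact Finset.sdiff_subset_sdiff Finset.inter_subset_right (Finset.Subset.refl E)
          · rw [Finset.mem_filter]
            refine ⟨hBG, Finset.union_subset hEB ?_⟩
            refine Finset.Subset.trans hS1 ?_
            intro x hx
            exact (Finset.mem_inter.mp (Finset.mem_sdiff.mp hx).1).1
        -- properties of E ∪ S for S in the index
        have hES : ∀ S ∈ (F \ E).powersetCard b,
            (E ∪ S) ⊆ Finset.range n ∧ (E ∪ S).card = E.card + b := by
          intro S hS
          rw [Finset.mem_powersetCard] at hS
          obtain ⟨hS1, hS2⟩ := hS
          have hdisj : Disjoint E S := by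
            have hd1 : Disjoint (F \ E) E := Finset.sdiff_disjoint
            exact (Finset.disjoint_of_subset_left hS1 hd1).symm
          constructor
          · apply Finset.union_subset hE
            exact Finset.Subset.trans hS1 (Finset.Subset.trans Finset.sdiff_subset hFr)
          · rw [Finset.card_union_of_disjoint hdisj, hS2]
        have hchoose : ((F \ E).powersetCard b).card ≤ (k - t + 1) ^ b := by
          rw [Finset.card_powersetCard, hFEcard]
          have e6 : k - j = (k - t) + b := by omega
          rw [e6]
          exact choose_le_pow' (k - t) b
        by_cases hm1 : E.card + b ≤ τ + 1
        · -- apply induction hypothesis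
          have hBND : ∀ S ∈ (F \ E).powersetCard b,
              (𝓖.filter (fun B => E ∪ S ⊆ B)).card
                ≤ (k - t + 1) ^ (τ + 1 - (E.card + b)) * (n - τ - 1).choose (k - τ - 1) := by
            intro S hS
            obtain ⟨hu1, hu2⟩ := hES S hS
            have := ih (E ∪ S) hu1 (by omega) (by omega) (by omega)
            rwa [hu2] at this
          calc (𝓖.filter (fun B => E ⊆ B)).card
              ≤ (((F \ E).powersetCard b).biUnion (fun S => 𝓖.filter (fun B => E ∪ S ⊆ B))).card :=
                Finset.card_le_card hcover
            _ ≤ ∑ S ∈ (F \ E).powersetCard b, (𝓖.filter (fun B => E ∪ S ⊆ B)).card :=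
                Finset.card_biUnion_le
            _ ≤ ((F \ E).powersetCard b).card *
                ((k - t + 1) ^ (τ + 1 - (E.card + b)) * (n - τ - 1).choose (k - τ - 1)) := by
                have := Finset.sum_le_card_nsmul _ _ _ hBND
                simpa [smul_eq_mul] using this
            _ ≤ (k - t + 1) ^ b *
                ((k - t + 1) ^ (τ + 1 - (E.card + b)) * (n - τ - 1).choose (k - τ - 1)) :=
                Nat.mul_le_mul_right _ hchoose
            _ = (k - t + 1) ^ (τ + 1 - E.card) * (n - τ - 1).choose (k - τ - 1) := by
                rw [← mul_assoc, ← pow_add]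
                congr 2
                omega
        · by_cases hm2 : E.card + b ≤ k
          · -- overshoot: use supG and chain
            set m := E.card + b with hmem2
            have hBND : ∀ S ∈ (F \ E).powersetCard b,
                (𝓖.filter (fun B => E ∪ S ⊆ B)).card ≤ (n - m).choose (k - m) := by
              intro S hS
              obtain ⟨hu1, hu2⟩ := hES S hS
              have := supG (E ∪ S) hu1
              rwa [hu2] at this
            have hmτ : τ + 1 < m := by omega
            have hpow : b = (τ + 1 - E.card) + (m - (τ + 1)) := by omega
            calc (𝓖.filter (fun B => E ⊆ B)).card
                ≤ (((F \ E).powersetCard b).biUnion (fun S => 𝓖.filter (fun B => E ∪ S ⊆ B))).card :=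
                  Finset.card_le_card hcover
              _ ≤ ∑ S ∈ (F \ E).powersetCard b, (𝓖.filter (fun B => E ∪ S ⊆ B)).card :=
                  Finset.card_biUnion_le
              _ ≤ ((F \ E).powersetCard b).card * ((n - m).choose (k - m)) := by
                  have := Finset.sum_le_card_nsmul _ _ _ hBND
                  simpa [smul_eq_mul] using this
              _ ≤ (k - t + 1) ^ b * ((n - m).choose (k - m)) :=
                  Nat.mul_le_mul_right _ hchoose
              _ = (k - t + 1) ^ (τ + 1 - E.card) *
                  ((k - t + 1) ^ (m - (τ + 1)) * (n - m).choose (k - m)) := by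
                  rw [← mul_assoc, ← pow_add, ← hpow]
              _ ≤ (k - t + 1) ^ (τ + 1 - E.card) * (n - τ - 1).choose (k - τ - 1) := by
                  apply Nat.mul_le_mul_left
                  have e7 : τ + 1 + (m - (τ + 1)) = m := by omega
                  have := chain (m - (τ + 1)) (by omega)
                  rwa [e7] at this
          · -- impossible: E ∪ S would be bigger than k
            have hBND : ∀ S ∈ (F \ E).powersetCard b,
                (𝓖.filter (fun B => E ∪ S ⊆ B)).card = 0 := by
              intro S hS
              obtain ⟨hu1, hu2⟩ := hES S hS
              rw [emptyG (E ∪ S) (by omega)]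
              simp
            calc (𝓖.filter (fun B => E ⊆ B)).card
                ≤ (((F \ E).powersetCard b).biUnion (fun S => 𝓖.filter (fun B => E ∪ S ⊆ B))).card :=
                  Finset.card_le_card hcover
              _ ≤ ∑ S ∈ (F \ E).powersetCard b, (𝓖.filter (fun B => E ∪ S ⊆ B)).card :=
                  Finset.card_biUnion_le
              _ = 0 := Finset.sum_eq_zero hBND
              _ ≤ _ := Nat.zero_le _
  -- final assembly
  have hTr : T ⊆ Finset.range n := hTcov.1
  have hfinal : 𝓑 ⊆ (T.powersetCard t).biUnion (fun E => 𝓖.filter (fun B => E ⊆ B)) := by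
    intro B hB
    have hBF : B ∈ 𝓕 := h𝓑 hB
    have hBG : B ∈ 𝓖 := by
      rw [h𝓖mem]
      exact ⟨⟨(hmem B hBF).1, (hmem B hBF).2⟩, fun A hA => hint B hBF A hA,
        fun S hS => hnc B hB S hS⟩
    have hBT : t ≤ (B ∩ T).card := by
      have := hTcov.2 B hBF
      rwa [Finset.inter_comm] at this
    obtain ⟨E, hE1, hE2⟩ := Finset.exists_subset_card_eq (s := B ∩ T) (n := t) hBT
    rw [Finset.mem_biUnion]
    refine ⟨E, ?_, ?_⟩
    · rw [Finset.mem_powersetCard]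
      exact ⟨Finset.Subset.trans hE1 Finset.inter_subset_right, hE2⟩
    · rw [Finset.mem_filter]
      exact ⟨hBG, Finset.Subset.trans hE1 Finset.inter_subset_left⟩
  have hperE : ∀ E ∈ T.powersetCard t,
      (𝓖.filter (fun B => E ⊆ B)).card
        ≤ (k - t + 1) ^ (τ + 1 - t) * (n - τ - 1).choose (k - τ - 1) := by
    intro E hE
    rw [Finset.mem_powersetCard] at hE
    obtain ⟨hE1, hE2⟩ := hE
    have := key (τ + 1 - t) E (Finset.Subset.trans hE1 hTr) (by omega) (by omega) (by omega)
    rwa [hE2] at this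
  calc 𝓑.card ≤ ((T.powersetCard t).biUnion (fun E => 𝓖.filter (fun B => E ⊆ B))).card :=
        Finset.card_le_card hfinal
    _ ≤ ∑ E ∈ T.powersetCard t, (𝓖.filter (fun B => E ⊆ B)).card := Finset.card_biUnion_le
    _ ≤ (T.powersetCard t).card *
        ((k - t + 1) ^ (τ + 1 - t) * (n - τ - 1).choose (k - τ - 1)) := by
        have := Finset.sum_le_card_nsmul _ _ _ hperE
        simpa [smul_eq_mul] using this
    _ = τ.choose t * ((k - t + 1) ^ (τ + 1 - t) * (n - τ - 1).choose (k - τ - 1)) := by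
        rw [Finset.card_powersetCard, hTcard]
    _ = (k - t + 1) ^ (τ - t + 1) * τ.choose t * (n - τ - 1).choose (k - τ - 1) := by
        rw [show τ + 1 - t = τ - t + 1 by omega]
        ring
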